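/- Fix u ≥ 0 and x > 0, and let w : (0,∞) → ℝ be measurable with |w(s)| ≤ x·s/(2(1+s+u)²(1+u)) for all s > 0. Then ∫₀^∞ [w(s)²/s + 2·w(s)⁴/s³] ds ≤ (x² + x⁴)/24. -/

import Mathlib

noncomputable section
open Real Set MeasureTheory

open Filter in
lemma majorant_integral (x : ℝ) :
    IntegrableOn (fun s : ℝ => x ^ 2 / 4 * (s / (1 + s) ^ 4) + x ^ 4 / 8 * (s / (1 + s) ^ 8))
      (Set.Ioi (0:ℝ)) ∧
    ∫ s in Set.Ioi (0:ℝ), (x ^ 2 / 4 * (s / (1 + s) ^ 4) + x ^ 4 / 8 * (s / (1 + s) ^ 8))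
      = x ^ 2 / 24 + x ^ 4 / 336 := by
  set g : ℝ → ℝ := fun s => x ^ 2 / 4 * (s / (1 + s) ^ 4) + x ^ 4 / 8 * (s / (1 + s) ^ 8) with hg
  set G : ℝ → ℝ := fun s => x ^ 2 / 4 * (-(1/2) * ((1+s)^2)⁻¹ + (1/3) * ((1+s)^3)⁻¹)
      + x ^ 4 / 8 * (-(1/6) * ((1+s)^6)⁻¹ + (1/7) * ((1+s)^7)⁻¹) with hG
  have hderiv : ∀ s ∈ Set.Ioi (0:ℝ), HasDerivAt G (g s) s := by
    intro s hs
    have hs0 : (0:ℝ) < s := hs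
    have hs1 : (0:ℝ) < 1 + s := by linarith
    have hne : (1 + s : ℝ) ≠ 0 := ne_of_gt hs1
    have h1 : HasDerivAt (fun t : ℝ => 1 + t) 1 s := (hasDerivAt_id s).const_add 1
    have hInv : ∀ n : ℕ, HasDerivAt (fun t : ℝ => ((1+t)^n)⁻¹)
        (-(n * (1+s)^(n-1) * 1) / ((1+s)^n)^2) s := fun n =>
      (h1.pow n).inv (pow_ne_zero n hne)
    have hA := ((hInv 2).const_mul (-(1/2):ℝ)).add ((hInv 3).const_mul ((1/3):ℝ))
    have hB := ((hInv 6).const_mul (-(1/6):ℝ)).add ((hInv 7).const_mul ((1/7):ℝ))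
    have hC := (hA.const_mul (x^2/4)).add (hB.const_mul (x^4/8))
    refine hC.congr_deriv ?_
    symm
    simp only [hg]
    field_simp
    ring
  have hnn : ∀ s ∈ Set.Ioi (0:ℝ), 0 ≤ g s := by
    intro s hs
    have hs0 : (0:ℝ) < s := hs
    have hs1 : (0:ℝ) < 1 + s := by linarith
    have : (0:ℝ) ≤ s / (1+s)^4 := by positivity
    have : (0:ℝ) ≤ s / (1+s)^8 := by positivity
    simp only [hg]
    positivity
  have hcont : ContinuousOn G (Set.Ici (0:ℝ)) := by
    apply ContinuousOn.add <;> apply ContinuousOn.mul continuousOn_const <;>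
      apply ContinuousOn.add <;> apply ContinuousOn.mul continuousOn_const <;>
      · apply ContinuousOn.inv₀
        · fun_prop
        · intro s hs
          have : (0:ℝ) ≤ s := hs
          positivity
  have htend : Tendsto G atTop (nhds 0) := by
    have hb : Tendsto (fun s : ℝ => 1 + s) atTop atTop :=
      tendsto_atTop_add_const_left _ 1 tendsto_id
    have hp : ∀ n : ℕ, 0 < n → Tendsto (fun s : ℝ => ((1+s)^n)⁻¹) atTop (nhds 0) := by
      intro n hn
      exact (tendsto_pow_atTop (by omega)).comp hb
        |>.inv_tendsto_atTop
    have hA := ((hp 2 (by norm_num)).const_mul (-(1/2):ℝ)).add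
        ((hp 3 (by norm_num)).const_mul ((1/3):ℝ))
    have hB := ((hp 6 (by norm_num)).const_mul (-(1/6):ℝ)).add
        ((hp 7 (by norm_num)).const_mul ((1/7):ℝ))
    have hC := (hA.const_mul (x^2/4)).add (hB.const_mul (x^4/8))
    rw [show (x^2/4 * (-(1/2)*(0:ℝ) + 1/3*0) + x^4/8*(-(1/6)*0 + 1/7*0)) = 0 by ring] at hC
    exact hC
  have hcw : ContinuousWithinAt G (Set.Ici (0:ℝ)) 0 := hcont 0 Set.self_mem_Ici
  have hint := integrableOn_Ioi_deriv_of_nonneg hcw hderiv hnn htend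
  have key := MeasureTheory.integral_Ioi_of_hasDerivAt_of_nonneg hcw hderiv hnn htend
  refine ⟨hint, ?_⟩
  rw [key]
  simp only [hG]
  norm_num
  ring

/-- **Key integral estimate for the metric exponent.** If `w` is measurable with
`|w(s)| ≤ x·s/(2(1+s+u)²(1+u))` for all `s > 0`, then
`∫₀^∞ [w(s)²/s + 2 w(s)⁴/s³] ds ≤ (x² + x⁴)/24`. -/
theorem key_integral_estimate
    (u x : ℝ) (hu : 0 ≤ u) (hx : 0 < x)
    (w : ℝ → ℝ) (hw : Measurable w)
    (hbound : ∀ s : ℝ, 0 < s →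
      |w s| ≤ x * s / (2 * (1 + s + u) ^ 2 * (1 + u))) :
    ∫ s in Set.Ioi (0:ℝ), ((w s) ^ 2 / s + 2 * (w s) ^ 4 / s ^ 3) ≤
      (x ^ 2 + x ^ 4) / 24 := by
  set g : ℝ → ℝ := fun s => x ^ 2 / 4 * (s / (1 + s) ^ 4) + x ^ 4 / 8 * (s / (1 + s) ^ 8) with hg
  have hmono : ∫ s in Set.Ioi (0:ℝ), ((w s) ^ 2 / s + 2 * (w s) ^ 4 / s ^ 3)
      ≤ ∫ s in Set.Ioi (0:ℝ), g s := by
    apply integral_mono_of_nonneg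
    · filter_upwards [ae_restrict_mem measurableSet_Ioi] with s hs
      have hs0 : (0:ℝ) < s := hs
      positivity
    · exact (majorant_integral x).1
    · filter_upwards [ae_restrict_mem measurableSet_Ioi] with s hs
      have hs0 : (0:ℝ) < s := hs
      have hs1 : (0:ℝ) < 1 + s := by linarith
      have hA : |w s| ≤ x * s / (2 * (1 + s) ^ 2) := by
        refine le_trans (hbound s hs0) ?_
        apply div_le_div_of_nonneg_left (by positivity) (by positivity)
        nlinarith [sq_nonneg (1+s), sq_nonneg u, mul_nonneg hu hs0.le,
          mul_nonneg (mul_nonneg hu hs0.le) hs0.le, mul_nonneg (mul_nonneg hu hu) hs0.le,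
          mul_nonneg hu hu, mul_nonneg (mul_nonneg hu hu) hu]
      have h2 : (w s) ^ 2 ≤ (x * s / (2 * (1 + s) ^ 2)) ^ 2 := by
        rw [← sq_abs]
        exact pow_le_pow_left₀ (abs_nonneg _) hA 2
      have h4 : (w s) ^ 4 ≤ (x * s / (2 * (1 + s) ^ 2)) ^ 4 := by
        rw [show (4:ℕ) = 2*2 from rfl, pow_mul, pow_mul]
        exact pow_le_pow_left₀ (sq_nonneg _) h2 2
      have e1 : (x * s / (2 * (1 + s) ^ 2)) ^ 2 / s = x ^ 2 / 4 * (s / (1 + s) ^ 4) := by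
        field_simp; ring
      have e2 : 2 * (x * s / (2 * (1 + s) ^ 2)) ^ 4 / s ^ 3
          = x ^ 4 / 8 * (s / (1 + s) ^ 8) := by
        field_simp; ring
      have b1 : (w s) ^ 2 / s ≤ x ^ 2 / 4 * (s / (1 + s) ^ 4) := by
        rw [← e1]; gcongr
      have b2 : 2 * (w s) ^ 4 / s ^ 3 ≤ x ^ 4 / 8 * (s / (1 + s) ^ 8) := by
        rw [← e2]; gcongr
      simpa [hg] using add_le_add b1 b2
  refine hmono.trans ?_
  rw [(majorant_integral x).2]
  nlinarith [sq_nonneg x, sq_nonneg (x^2), pow_pos hx 4]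

end
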